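/- Let f, g : ℝ^N → ℝ be quasiconvex functions such that f = g almost everywhere with respect to Lebesgue measure, and let m ∈ [−∞, ∞) denote their common essential infimum over ℝ^N. Then every point of approximate continuity of g is a point of approximate continuity of f if and only if there is no point x of approximate continuity of g with m finite, g(x) = m and f(x) < m. In that case, f(x) = g(x) at every point x of approximate continuity of g. -/

import Mathlib

open MeasureTheory Metric Filter
open scoped ENNReal

/-- `f` is approximately continuous at `x` if for every `ε > 0` the set
`{y | |f y - f x| < ε}` has Lebesgue density `1` at `x`. -/
def ApproxContinuousAt {N : ℕ} (f : EuclideanSpace ℝ (Fin N) → ℝ)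
    (x : EuclideanSpace ℝ (Fin N)) : Prop :=
  ∀ ε : ℝ, 0 < ε →
    Tendsto (fun r : ℝ => volume ({y | |f y - f x| < ε} ∩ ball x r) / volume (ball x r))
      (nhdsWithin 0 (Set.Ioi 0)) (nhds 1)

namespace Stmt15Aux

variable {N : ℕ}

lemma vol_ball_ne_zero (x : EuclideanSpace ℝ (Fin N)) {r : ℝ} (hr : 0 < r) :
    volume (ball x r) ≠ 0 := (measure_ball_pos _ _ hr).ne'

lemma vol_ball_ne_top (x : EuclideanSpace ℝ (Fin N)) (r : ℝ) :
    volume (ball x r) ≠ ⊤ := measure_ball_lt_top.ne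

/-- the sum of relative densities of two disjoint sets (one null measurable) is at most 1. -/
lemma ratio_add_le (x : EuclideanSpace ℝ (Fin N)) {s t : Set (EuclideanSpace ℝ (Fin N))}
    (hd : Disjoint s t) (ht : NullMeasurableSet t volume) {r : ℝ} (hr : 0 < r) :
    volume (s ∩ ball x r) / volume (ball x r) + volume (t ∩ ball x r) / volume (ball x r) ≤ 1 := by
  rw [ENNReal.div_add_div_same]
  have hle : volume (s ∩ ball x r) + volume (t ∩ ball x r) ≤ volume (ball x r) := by
    rw [← measure_union₀ (ht.inter measurableSet_ball.nullMeasurableSet)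
      ((hd.mono Set.inter_subset_left Set.inter_subset_left).aedisjoint)]
    exact measure_mono (Set.union_subset Set.inter_subset_right Set.inter_subset_right)
  calc (volume (s ∩ ball x r) + volume (t ∩ ball x r)) / volume (ball x r)
      ≤ volume (ball x r) / volume (ball x r) := ENNReal.div_le_div_right hle _
    _ = 1 := ENNReal.div_self (vol_ball_ne_zero x hr) (vol_ball_ne_top x r)

/-- Two sets of density 1 at `x` cannot have pointwise density-sum ≤ 1. -/
lemma not_both_dense {u v : ℝ → ℝ≥0∞}
    (hu : Tendsto u (nhdsWithin 0 (Set.Ioi 0)) (nhds 1))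
    (hv : Tendsto v (nhdsWithin 0 (Set.Ioi 0)) (nhds 1))
    (h : ∀ r ∈ Set.Ioi (0:ℝ), u r + v r ≤ 1) : False := by
  have h2 : Tendsto (fun r => u r + v r) (nhdsWithin (0:ℝ) (Set.Ioi 0)) (nhds 2) := by
    simpa [one_add_one_eq_two] using hu.add hv
  have := le_of_tendsto h2 (eventually_nhdsWithin_of_forall h)
  norm_num at this

lemma const_plus_dense {κ : ℝ≥0∞} (hκ : κ ≠ 0) {v : ℝ → ℝ≥0∞}
    (hv : Tendsto v (nhdsWithin 0 (Set.Ioi 0)) (nhds 1))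
    (h : ∀ᶠ r in nhdsWithin (0:ℝ) (Set.Ioi 0), κ + v r ≤ 1) : False := by
  have h2 : Tendsto (fun r => κ + v r) (nhdsWithin (0:ℝ) (Set.Ioi 0)) (nhds (κ + 1)) :=
    tendsto_const_nhds.add hv
  have hle : κ + 1 ≤ 1 := le_of_tendsto h2 h
  apply hκ
  by_contra ha
  have : 1 < κ + 1 := by
    have := ENNReal.lt_add_right (a := (1:ℝ≥0∞)) ENNReal.one_ne_top ha
    simpa [add_comm] using this
  exact absurd (this.trans_le hle) (lt_irrefl _)

/-- sublevel-type sets of a quasiconvex function are null measurable. -/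
lemma nms_abs {g : EuclideanSpace ℝ (Fin N) → ℝ} (hg : ∀ α : ℝ, Convex ℝ {x | g x < α})
    (c ε : ℝ) : NullMeasurableSet {y : EuclideanSpace ℝ (Fin N) | |g y - c| < ε} volume := by
  have h2 : ∀ a : ℝ, NullMeasurableSet {y : EuclideanSpace ℝ (Fin N) | g y ≤ a} volume := by
    intro a
    have hset : {y : EuclideanSpace ℝ (Fin N) | g y ≤ a}
        = ⋂ n : ℕ, {y | g y < a + 1/(n+1)} := by
      ext y
      simp only [Set.mem_iInter, Set.mem_setOf_eq]
      constructor
      · intro h n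
        have hn : (0:ℝ) < 1/(n+1) := by positivity
        linarith
      · intro h
        by_contra hc
        push_neg at hc
        obtain ⟨n, hn⟩ := exists_nat_one_div_lt (by linarith : (0:ℝ) < g y - a)
        have := h n
        linarith
    rw [hset]
    exact NullMeasurableSet.iInter fun n => (hg _).nullMeasurableSet _
  have h1 : {y : EuclideanSpace ℝ (Fin N) | |g y - c| < ε}
      = {y | g y < c + ε} ∩ {y | g y ≤ c - ε}ᶜ := by
    ext y
    simp only [Set.mem_setOf_eq, Set.mem_inter_iff, Set.mem_compl_iff, abs_lt, not_le]
    constructor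
    · rintro ⟨h1, h2⟩; exact ⟨by linarith, by linarith⟩
    · rintro ⟨h1, h2⟩; exact ⟨by linarith, by linarith⟩
  rw [h1]
  exact ((hg _).nullMeasurableSet _).inter (h2 _).compl

end Stmt15Aux
namespace Stmt15Aux

variable {N : ℕ} {f g : EuclideanSpace ℝ (Fin N) → ℝ}

/-- If `f = g` a.e. and `g` is approximately continuous at `x` with `f x = g x`,
then `f` is approximately continuous at `x`. -/
lemma ac_of_eq (hfg : f =ᵐ[volume] g) {x : EuclideanSpace ℝ (Fin N)}
    (hgx : ApproxContinuousAt g x) (h : f x = g x) : ApproxContinuousAt f x := by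
  intro ε hε
  have hs : {y | |f y - f x| < ε} =ᵐ[volume] {y | |g y - g x| < ε} := by
    rw [Filter.eventuallyEq_set]
    filter_upwards [hfg] with y hy
    rw [hy, h]
  have heq : (fun r : ℝ => volume ({y | |f y - f x| < ε} ∩ ball x r) / volume (ball x r)) =
      fun r : ℝ => volume ({y | |g y - g x| < ε} ∩ ball x r) / volume (ball x r) := by
    funext r
    congr 1; exact measure_congr (hs.inter (Filter.EventuallyEq.refl _ _))
  rw [heq]
  exact hgx ε hε

/-- If `f = g` a.e., `g` quasiconvex, and both are approximately continuous at `x`,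
then `f x = g x`. -/
lemma eq_of_ac (hg : ∀ α : ℝ, Convex ℝ {x | g x < α}) (hfg : f =ᵐ[volume] g)
    {x : EuclideanSpace ℝ (Fin N)}
    (hgx : ApproxContinuousAt g x) (hfx : ApproxContinuousAt f x) : f x = g x := by
  by_contra hne
  have habs : 0 < |f x - g x| := abs_pos.mpr (sub_ne_zero.mpr hne)
  set ε := |f x - g x| / 2 with hεdef
  have hε0 : 0 < ε := by positivity
  have hdisj : Disjoint {y : EuclideanSpace ℝ (Fin N) | |g y - f x| < ε}
      {y | |g y - g x| < ε} := by
    rw [Set.disjoint_left]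
    intro y h1 h2
    simp only [Set.mem_setOf_eq, abs_lt] at h1 h2
    have : |f x - g x| < 2 * ε := abs_lt.2 ⟨by linarith, by linarith⟩
    linarith [hεdef ▸ this]
  have hA : {y : EuclideanSpace ℝ (Fin N) | |f y - f x| < ε} =ᵐ[volume]
      {y | |g y - f x| < ε} := by
    rw [Filter.eventuallyEq_set]
    filter_upwards [hfg] with y hy
    rw [hy]
  have hu : Tendsto (fun r : ℝ => volume ({y | |g y - f x| < ε} ∩ ball x r) / volume (ball x r))
      (nhdsWithin 0 (Set.Ioi 0)) (nhds 1) := by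
    have heq : (fun r : ℝ => volume ({y | |g y - f x| < ε} ∩ ball x r) / volume (ball x r)) =
        fun r : ℝ => volume ({y | |f y - f x| < ε} ∩ ball x r) / volume (ball x r) := by
      funext r
      congr 1; exact (measure_congr (hA.inter (Filter.EventuallyEq.refl _ _))).symm
    rw [heq]
    exact hfx ε hε0
  exact not_both_dense hu (hgx ε hε0)
    (fun r hr => ratio_add_le x hdisj (nms_abs hg (g x) ε) hr)

/-- `f x ≤ g x` at points of approximate continuity of `g`, by quasiconvexity of `f`. -/
lemma fle (hf : ∀ α : ℝ, Convex ℝ {x | f x < α}) (hg : ∀ α : ℝ, Convex ℝ {x | g x < α})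
    (hfg : f =ᵐ[volume] g) {x : EuclideanSpace ℝ (Fin N)}
    (hgx : ApproxContinuousAt g x) : f x ≤ g x := by
  by_contra hlt
  push_neg at hlt
  set α := (g x + f x) / 2 with hα
  set ε := (f x - g x) / 2 with hε
  have hε0 : 0 < ε := by simp only [hε]; linarith
  set S := {y : EuclideanSpace ℝ (Fin N) | f y < α} with hS
  set σ : EuclideanSpace ℝ (Fin N) → EuclideanSpace ℝ (Fin N) := fun y => (x + x) - y with hσ
  have hmp : MeasurePreserving σ volume volume :=
    Measure.measurePreserving_sub_left volume (x + x)
  have hballs : ∀ r : ℝ, σ ⁻¹' (ball x r) = ball x r := by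
    intro r
    ext y
    simp only [Set.mem_preimage, mem_ball, hσ, dist_eq_norm]
    constructor
    · intro h
      have : x + x - y - x = -(y - x) := by abel
      rwa [this, norm_neg] at h
    · intro h
      have : x + x - y - x = -(y - x) := by abel
      rwa [this, norm_neg]
  have hxnS : x ∉ S := by
    simp only [hS, Set.mem_setOf_eq, hα, not_lt]
    linarith
  have hdisjS : Disjoint S (σ ⁻¹' S) := by
    rw [Set.disjoint_left]
    intro y hy hy2
    apply hxnS
    have hmem := (hf α) hy hy2 (by norm_num : (0:ℝ) ≤ 1/2) (by norm_num : (0:ℝ) ≤ 1/2)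
      (by norm_num)
    have : (1/2 : ℝ) • y + (1/2 : ℝ) • σ y = x := by
      simp only [hσ]
      module
    rwa [this] at hmem
  have hSnm : NullMeasurableSet S volume := (hf α).nullMeasurableSet _
  have hvol : ∀ r : ℝ, volume (σ ⁻¹' S ∩ ball x r) = volume (S ∩ ball x r) := by
    intro r
    have h1 : σ ⁻¹' S ∩ ball x r = σ ⁻¹' (S ∩ ball x r) := by
      rw [Set.preimage_inter, hballs r]
    rw [h1, hmp.measure_preimage (hSnm.inter measurableSet_ball.nullMeasurableSet)]
  -- B has density 1 and is a.e. contained in S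
  have hBS : ∀ᵐ y ∂(volume : Measure (EuclideanSpace ℝ (Fin N))),
      y ∈ {y | |g y - g x| < ε} → y ∈ S := by
    filter_upwards [hfg] with y hy hmem
    simp only [Set.mem_setOf_eq, abs_lt] at hmem
    simp only [hS, Set.mem_setOf_eq, hy, hα]
    simp only [hε] at hmem
    linarith [hmem.2]
  have hratio : ∀ r ∈ Set.Ioi (0:ℝ),
      volume ({y | |g y - g x| < ε} ∩ ball x r) / volume (ball x r)
      + volume ({y | |g y - g x| < ε} ∩ ball x r) / volume (ball x r) ≤ 1 := by
    intro r hr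
    have hmono : volume ({y | |g y - g x| < ε} ∩ ball x r) ≤ volume (S ∩ ball x r) := by
      apply measure_mono_ae
      filter_upwards [hBS] with y hy ⟨h1, h2⟩
      exact ⟨hy h1, h2⟩
    have h1 : volume ({y | |g y - g x| < ε} ∩ ball x r) / volume (ball x r)
        ≤ volume (S ∩ ball x r) / volume (ball x r) := ENNReal.div_le_div_right hmono _
    have h2 := ratio_add_le x hdisjS (hSnm.preimage hmp.quasiMeasurePreserving) hr
    rw [hvol r] at h2
    exact le_trans (add_le_add h1 h1) h2
  exact not_both_dense (hgx ε hε0) (hgx ε hε0) hratio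

end Stmt15Aux
namespace Stmt15Aux

variable {N : ℕ} {f g : EuclideanSpace ℝ (Fin N) → ℝ}

/-- At any point of approximate continuity of `g`, the set `{|g · - g x| < ε}` has positive
measure. -/
lemma pos_meas {x : EuclideanSpace ℝ (Fin N)} (hgx : ApproxContinuousAt g x)
    {ε : ℝ} (hε : 0 < ε) : volume {y : EuclideanSpace ℝ (Fin N) | |g y - g x| < ε} ≠ 0 := by
  intro h0
  have hz : (fun r : ℝ => volume ({y | |g y - g x| < ε} ∩ ball x r) / volume (ball x r))
      = fun _ : ℝ => (0 : ℝ≥0∞) := by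
    funext r
    have : volume ({y | |g y - g x| < ε} ∩ ball x r) = 0 :=
      le_antisymm (h0 ▸ measure_mono Set.inter_subset_left) zero_le
    simp [this]
  have h1 := hgx ε hε
  rw [hz] at h1
  have := tendsto_nhds_unique h1 tendsto_const_nhds
  norm_num at this

/-- The essential infimum of `f` is at most `g x` at any approximate continuity point of `g`. -/
lemma essInf_le_val (hfg : f =ᵐ[volume] g) {x : EuclideanSpace ℝ (Fin N)}
    (hgx : ApproxContinuousAt g x) :
    essInf (fun y => (f y : EReal)) volume ≤ (g x : EReal) := by
  by_contra hlt
  push_neg at hlt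
  obtain ⟨c, hc1, hc2⟩ := EReal.exists_between_coe_real hlt
  have hε0 : 0 < c - g x := by
    have := EReal.coe_lt_coe_iff.mp hc1
    linarith
  have hae : ∀ᵐ y ∂(volume : Measure (EuclideanSpace ℝ (Fin N))), (c : EReal) < (f y : EReal) :=
    ae_lt_of_lt_essInf hc2
  have hnull : volume {y : EuclideanSpace ℝ (Fin N) | |g y - g x| < c - g x} = 0 := by
    rw [measure_eq_zero_iff_ae_notMem]
    filter_upwards [hfg, hae] with y hy hcy
    simp only [Set.mem_setOf_eq, abs_lt, not_and_or, not_lt]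
    right
    have : c < f y := EReal.coe_lt_coe_iff.mp hcy
    rw [hy] at this
    linarith
  exact pos_meas hgx hε0 hnull

end Stmt15Aux
namespace Stmt15Aux

variable {N : ℕ} {f g : EuclideanSpace ℝ (Fin N) → ℝ}

lemma sublevel_null (hf : ∀ α : ℝ, Convex ℝ {x | f x < α})
    (hg : ∀ α : ℝ, Convex ℝ {x | g x < α}) (hfg : f =ᵐ[volume] g)
    {x : EuclideanSpace ℝ (Fin N)} (hgx : ApproxContinuousAt g x)
    {α : ℝ} (hxα : f x < α) (hαg : α < g x) :
    volume {y : EuclideanSpace ℝ (Fin N) | f y < α} = 0 := by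
  by_contra hvol
  set T := {y : EuclideanSpace ℝ (Fin N) | f y < α} with hT
  have hTconv : Convex ℝ T := hf α
  -- T has nonempty interior since it has positive measure
  have hint : (interior T).Nonempty := by
    by_contra hi
    rw [Set.not_nonempty_iff_eq_empty] at hi
    apply hvol
    have hsub : T ⊆ frontier T := by
      intro y hy
      rw [frontier, hi, Set.diff_empty]
      exact subset_closure hy
    exact measure_mono_null hsub (hTconv.addHaar_frontier _)
  obtain ⟨z, hz⟩ := hint
  obtain ⟨δ, hδ0, hδ⟩ := Metric.isOpen_iff.mp isOpen_interior z hz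
  set R := ‖z - x‖ + δ with hR
  have hR0 : 0 < R := by positivity
  set κ := ENNReal.ofReal ((δ / R) ^ N) with hκ
  have hκ0 : κ ≠ 0 := by
    rw [hκ]
    simp only [ne_eq, ENNReal.ofReal_eq_zero, not_le]
    positivity
  have hxT : x ∈ T := hxα
  -- cone estimate: for 0 < r ≤ R the set T fills proportion ≥ κ of ball x r
  have hcone : ∀ r : ℝ, 0 < r → r ≤ R →
      κ ≤ volume (T ∩ ball x r) / volume (ball x r) := by
    intro r hr0 hrR
    set t := r / R with ht
    have ht0 : 0 < t := by positivity
    have ht1 : t ≤ 1 := by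
      rw [ht, div_le_one hR0]; exact hrR
    set c := x + t • (z - x) with hc
    have hsub1 : ball c (t * δ) ⊆ T := by
      intro w hw
      rw [mem_ball, dist_eq_norm] at hw
      set v := z + t⁻¹ • (w - c) with hv
      have hvz : v ∈ ball z δ := by
        rw [mem_ball, dist_eq_norm, hv]
        have : z + t⁻¹ • (w - c) - z = t⁻¹ • (w - c) := by abel
        rw [this, norm_smul, Real.norm_eq_abs, abs_of_pos (by positivity)]
        calc t⁻¹ * ‖w - c‖ < t⁻¹ * (t * δ) := by
              apply mul_lt_mul_of_pos_left hw (by positivity)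
          _ = δ := by field_simp
      have hvT : v ∈ T := interior_subset (hδ hvz)
      have hmem := hTconv hxT hvT (by linarith : (0:ℝ) ≤ 1 - t) (le_of_lt ht0) (by ring)
      have hwv : (1 - t) • x + t • v = w := by
        rw [hv, hc]
        match_scalars <;> field_simp <;> ring
      rwa [hwv] at hmem
    have hsub2 : ball c (t * δ) ⊆ ball x r := by
      intro w hw
      rw [mem_ball] at hw ⊢
      have hcx : dist c x = t * ‖z - x‖ := by
        rw [hc, dist_eq_norm]
        have : x + t • (z - x) - x = t • (z - x) := by abel
        rw [this, norm_smul, Real.norm_eq_abs, abs_of_pos ht0]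
      calc dist w x ≤ dist w c + dist c x := dist_triangle w c x
        _ < t * δ + t * ‖z - x‖ := by rw [hcx]; linarith
        _ = t * R := by rw [hR]; ring
        _ = r := by rw [ht]; field_simp
    have hballvol : κ * volume (ball x r) = volume (ball c (t * δ)) := by
      rw [Measure.addHaar_ball_of_pos _ _ hr0, Measure.addHaar_ball_of_pos _ _ (by positivity : 0 < t * δ),
        finrank_euclideanSpace_fin, ← mul_assoc, ← ENNReal.ofReal_mul (by positivity)]
      congr 2
      rw [ht]
      field_simp
      ring
    have hle : κ * volume (ball x r) ≤ volume (T ∩ ball x r) := by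
      rw [hballvol]
      exact measure_mono (Set.subset_inter hsub1 hsub2)
    exact (ENNReal.le_div_iff_mul_le (Or.inl (vol_ball_ne_zero x hr0))
      (Or.inl (vol_ball_ne_top x r))).2 hle
  -- B is a.e. disjoint from T
  set ε := g x - α with hεd
  have hε0 : 0 < ε := by rw [hεd]; linarith
  set B := {y : EuclideanSpace ℝ (Fin N) | |g y - g x| < ε} with hB
  have hBT : ∀ᵐ y ∂(volume : Measure (EuclideanSpace ℝ (Fin N))), y ∉ B ∩ T := by
    filter_upwards [hfg] with y hy
    rintro ⟨h1, h2⟩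
    simp only [hB, Set.mem_setOf_eq, abs_lt] at h1
    simp only [hT, Set.mem_setOf_eq, hy] at h2
    rw [hεd] at h1
    linarith [h1.1]
  have hev : ∀ᶠ r in nhdsWithin (0:ℝ) (Set.Ioi 0),
      κ + volume (B ∩ ball x r) / volume (ball x r) ≤ 1 := by
    filter_upwards [Ioc_mem_nhdsGT_of_mem (Set.mem_Ico.mpr ⟨le_refl (0:ℝ), hR0⟩)] with r hr
    obtain ⟨hr0, hrR⟩ := hr
    have h1 := hcone r hr0 hrR
    have h2 : volume (B ∩ ball x r) ≤ volume ((B \ T) ∩ ball x r) := by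
      apply measure_mono_ae
      filter_upwards [hBT] with y hy
      rintro ⟨hyB, hyb⟩
      exact ⟨⟨hyB, fun hyT => hy ⟨hyB, hyT⟩⟩, hyb⟩
    have h3 := ratio_add_le x disjoint_sdiff_self_right
      ((nms_abs hg (g x) ε).diff ((hf α).nullMeasurableSet _)) hr0
    calc κ + volume (B ∩ ball x r) / volume (ball x r)
        ≤ volume (T ∩ ball x r) / volume (ball x r)
          + volume ((B \ T) ∩ ball x r) / volume (ball x r) :=
          add_le_add h1 (ENNReal.div_le_div_right h2 _)
      _ ≤ 1 := h3
  exact const_plus_dense hκ0 (hgx ε hε0) hev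

lemma val_le_essInf (hf : ∀ α : ℝ, Convex ℝ {x | f x < α})
    (hg : ∀ α : ℝ, Convex ℝ {x | g x < α}) (hfg : f =ᵐ[volume] g)
    {x : EuclideanSpace ℝ (Fin N)} (hgx : ApproxContinuousAt g x) (hlt : f x < g x) :
    (g x : EReal) ≤ essInf (fun y => (f y : EReal)) volume := by
  have key2 : ∀ q : ℚ, (q:ℝ) < g x → volume {y : EuclideanSpace ℝ (Fin N) | f y < q} = 0 := by
    intro q hq
    rcases lt_or_ge (f x) q with h | h
    · exact sublevel_null hf hg hfg hgx h hq
    · have hβ := sublevel_null hf hg hfg hgx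
        (show f x < (f x + g x)/2 by linarith) (show (f x + g x)/2 < g x by linarith)
      refine measure_mono_null (fun y hy => ?_) hβ
      simp only [Set.mem_setOf_eq] at hy ⊢
      have : (q:ℝ) ≤ (f x + g x)/2 := by linarith
      linarith
  refine le_essInf_of_ae_le _ ?_
  have hq : ∀ᵐ y ∂(volume : Measure (EuclideanSpace ℝ (Fin N))),
      ∀ q : ℚ, (q:ℝ) < g x → ¬ (f y < q) := by
    rw [ae_all_iff]
    intro q
    by_cases hqx : (q:ℝ) < g x
    · have := key2 q hqx
      rw [measure_eq_zero_iff_ae_notMem] at this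
      filter_upwards [this] with y hy
      exact fun _ => hy
    · exact Filter.Eventually.of_forall fun y h => absurd h hqx
  filter_upwards [hq] with y hy
  show (g x : EReal) ≤ (f y : EReal)
  rw [EReal.coe_le_coe_iff]
  by_contra hc
  push_neg at hc
  obtain ⟨q, hq1, hq2⟩ := exists_rat_btwn hc
  exact hy q hq2 hq1

end Stmt15Aux

open Stmt15Aux in
theorem stmt_15 {N : ℕ} (f g : EuclideanSpace ℝ (Fin N) → ℝ)
    (hf : ∀ α : ℝ, Convex ℝ {x | f x < α}) (hg : ∀ α : ℝ, Convex ℝ {x | g x < α})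
    (hfg : f =ᵐ[volume] g) (m : EReal)
    (hm : m = essInf (fun x => (f x : EReal)) volume) (hmtop : m ≠ ⊤) :
    ((∀ x, ApproxContinuousAt g x → ApproxContinuousAt f x) ↔
      ¬ ∃ x, ApproxContinuousAt g x ∧ m ≠ ⊥ ∧ (g x : EReal) = m ∧ (f x : EReal) < m) ∧
    ((∀ x, ApproxContinuousAt g x → ApproxContinuousAt f x) →
      ∀ x, ApproxContinuousAt g x → f x = g x) := by
  have heq : (∀ x, ApproxContinuousAt g x → ApproxContinuousAt f x) →
      ∀ x, ApproxContinuousAt g x → f x = g x := by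
    intro hall x hacg
    exact eq_of_ac hg hfg hacg (hall x hacg)
  refine ⟨⟨?_, ?_⟩, heq⟩
  · rintro hall ⟨x, hacg, -, hgm, hfm⟩
    have hfgx := heq hall x hacg
    rw [← hfgx] at hgm
    rw [hgm] at hfm
    exact lt_irrefl _ hfm
  · intro hnone x hacg
    have h1 : f x ≤ g x := fle hf hg hfg hacg
    have h2 : ¬ f x < g x := by
      intro hlt
      apply hnone
      have hgxm : (g x : EReal) = m := by
        apply le_antisymm
        · rw [hm]; exact val_le_essInf hf hg hfg hacg hlt
        · rw [hm]; exact essInf_le_val hfg hacg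
      refine ⟨x, hacg, ?_, hgxm, ?_⟩
      · rw [← hgxm]; exact EReal.coe_ne_bot _
      · rw [← hgxm]; exact_mod_cast hlt
    exact ac_of_eq hfg hacg (le_antisymm h1 (not_lt.mp h2))
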